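/- The number of dominating sets of the grid graph is supermultiplicative in each dimension: for all positive integers m, n₁, n₂, G_{m×(n₁+n₂)}(1) ≥ G_{m×n₁}(1) · G_{m×n₂}(1), and for all positive integers m₁, m₂, n, G_{(m₁+m₂)×n}(1) ≥ G_{m₁×n}(1) · G_{m₂×n}(1). -/

import Mathlib

open scoped Classical

/-- `S` is a dominating set of `G`: every vertex is in `S` or adjacent to a vertex of `S`. -/
def IsDominating {V : Type*} (G : SimpleGraph V) (S : Finset V) : Prop :=
  ∀ v : V, v ∈ S ∨ ∃ u ∈ S, G.Adj u v

/-- The m×n grid graph `P_m □ P_n`. -/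
def gridGraph (m n : ℕ) : SimpleGraph (Fin m × Fin n) :=
  (SimpleGraph.pathGraph m).boxProd (SimpleGraph.pathGraph n)

/-- `G_{m×n}(1)`: the total number of dominating sets of the m×n grid graph. -/
noncomputable def numDomGrid (m n : ℕ) : ℕ :=
  (Finset.univ.filter
    (fun S : Finset (Fin m × Fin n) => IsDominating (gridGraph m n) S)).card

lemma grid_adj {m n : ℕ} {x y : Fin m × Fin n} :
    (gridGraph m n).Adj x y ↔
      ((((x.1 : ℕ) + 1 = y.1 ∨ (y.1 : ℕ) + 1 = x.1) ∧ x.2 = y.2) ∨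
       (((x.2 : ℕ) + 1 = y.2 ∨ (y.2 : ℕ) + 1 = x.2) ∧ x.1 = y.1)) := by
  simp [gridGraph, SimpleGraph.boxProd_adj, SimpleGraph.pathGraph_adj]

lemma key (m n₁ n₂ : ℕ) :
    numDomGrid m n₁ * numDomGrid m n₂ ≤ numDomGrid m (n₁ + n₂) := by
  classical
  set f₁ : Fin m × Fin n₁ → Fin m × Fin (n₁ + n₂) :=
    fun p => (p.1, Fin.castAdd n₂ p.2) with hf₁def
  set f₂ : Fin m × Fin n₂ → Fin m × Fin (n₁ + n₂) :=
    fun p => (p.1, Fin.natAdd n₁ p.2) with hf₂def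
  have hf₁ : Function.Injective f₁ := by
    intro a b h
    simp only [hf₁def, Prod.ext_iff, Fin.ext_iff, Fin.coe_castAdd] at h
    exact Prod.ext (Fin.ext h.1) (Fin.ext h.2)
  have hf₂ : Function.Injective f₂ := by
    intro a b h
    simp only [hf₂def, Prod.ext_iff, Fin.ext_iff, Fin.coe_natAdd] at h
    exact Prod.ext (Fin.ext h.1) (Fin.ext (by omega))
  set g : Finset (Fin m × Fin n₁) × Finset (Fin m × Fin n₂) →
      Finset (Fin m × Fin (n₁ + n₂)) :=
    fun P => P.1.image f₁ ∪ P.2.image f₂ with hgdef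
  -- membership characterizations
  have hmem₁ : ∀ (P : Finset (Fin m × Fin n₁) × Finset (Fin m × Fin n₂))
      (x : Fin m × Fin n₁), x ∈ P.1 ↔ f₁ x ∈ g P := by
    intro P x
    constructor
    · intro hx; exact Finset.mem_union_left _ (Finset.mem_image_of_mem _ hx)
    · intro hx
      rcases Finset.mem_union.1 hx with h | h
      · rcases Finset.mem_image.1 h with ⟨y, hy, hxy⟩
        rwa [hf₁ hxy] at hy
      · rcases Finset.mem_image.1 h with ⟨y, hy, hxy⟩
        exfalso
        have := congrArg (fun p => (p.2 : ℕ)) hxy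
        simp [hf₁def, hf₂def] at this
        omega
  have hmem₂ : ∀ (P : Finset (Fin m × Fin n₁) × Finset (Fin m × Fin n₂))
      (x : Fin m × Fin n₂), x ∈ P.2 ↔ f₂ x ∈ g P := by
    intro P x
    constructor
    · intro hx; exact Finset.mem_union_right _ (Finset.mem_image_of_mem _ hx)
    · intro hx
      rcases Finset.mem_union.1 hx with h | h
      · rcases Finset.mem_image.1 h with ⟨y, hy, hxy⟩
        exfalso
        have := congrArg (fun p => (p.2 : ℕ)) hxy
        simp [hf₁def, hf₂def] at this
        omega
      · rcases Finset.mem_image.1 h with ⟨y, hy, hxy⟩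
        rwa [hf₂ hxy] at hy
  have hinj : ∀ P Q : Finset (Fin m × Fin n₁) × Finset (Fin m × Fin n₂),
      g P = g Q → P = Q := by
    intro P Q h
    have h1 : P.1 = Q.1 := by
      ext x; rw [hmem₁ P x, hmem₁ Q x, h]
    have h2 : P.2 = Q.2 := by
      ext x; rw [hmem₂ P x, hmem₂ Q x, h]
    exact Prod.ext h1 h2
  unfold numDomGrid
  rw [← Finset.card_product]
  apply Finset.card_le_card_of_injOn g _ (fun P _ Q _ h => hinj P Q h)
  -- maps to: domination
  rintro ⟨S₁, S₂⟩ hP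
  simp only [Finset.mem_coe, Finset.mem_product, Finset.mem_filter, Finset.mem_univ, true_and] at hP ⊢
  obtain ⟨hS₁, hS₂⟩ := hP
  intro v
  obtain ⟨a, b⟩ := v
  by_cases hb : (b : ℕ) < n₁
  · set b' : Fin n₁ := ⟨b, hb⟩ with hb'def
    have hfb : f₁ (a, b') = (a, b) := by
      simp [hf₁def, Fin.ext_iff, hb'def]
    rcases hS₁ (a, b') with h | ⟨u, hu, hadj⟩
    · left
      rw [← hfb]
      exact (hmem₁ (S₁, S₂) (a, b')).1 h
    · right
      refine ⟨f₁ u, (hmem₁ (S₁, S₂) u).1 hu, ?_⟩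
      rw [grid_adj] at hadj ⊢
      simp only [hf₁def, Fin.ext_iff, Fin.coe_castAdd, hb'def] at hadj ⊢
      omega
  · have hb2 : (b : ℕ) - n₁ < n₂ := by omega
    set b' : Fin n₂ := ⟨(b : ℕ) - n₁, hb2⟩ with hb'def
    have hfb : f₂ (a, b') = (a, b) := by
      simp only [hf₂def, hb'def, Prod.ext_iff, Fin.ext_iff, Fin.coe_natAdd]
      exact ⟨trivial, by omega⟩
    rcases hS₂ (a, b') with h | ⟨u, hu, hadj⟩
    · left
      rw [← hfb]
      exact (hmem₂ (S₁, S₂) (a, b')).1 h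
    · right
      refine ⟨f₂ u, (hmem₂ (S₁, S₂) u).1 hu, ?_⟩
      rw [grid_adj] at hadj ⊢
      simp only [hf₂def, Fin.ext_iff, Fin.coe_natAdd, hb'def] at hadj ⊢
      omega

lemma swap_eq (m n : ℕ) : numDomGrid m n = numDomGrid n m := by
  classical
  unfold numDomGrid
  apply Finset.card_bij (fun S _ => S.image Prod.swap)
  · intro S hS
    simp only [Finset.mem_filter, Finset.mem_univ, true_and] at hS ⊢
    intro v
    rcases hS v.swap with h | ⟨u, hu, hadj⟩
    · left
      have : v = v.swap.swap := by simp
      rw [this]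
      exact Finset.mem_image_of_mem _ h
    · right
      refine ⟨u.swap, Finset.mem_image_of_mem _ hu, ?_⟩
      rw [grid_adj] at hadj ⊢
      tauto
  · intro S _ T _ h
    have := congrArg (fun X : Finset (Fin n × Fin m) => X.image Prod.swap) h
    simpa [Finset.image_image, Function.comp,
      Finset.image_id'] using this
  · intro T hT
    refine ⟨T.image Prod.swap, ?_, ?_⟩
    · simp only [Finset.mem_filter, Finset.mem_univ, true_and] at hT ⊢
      intro v
      rcases hT v.swap with h | ⟨u, hu, hadj⟩
      · left
        have : v = v.swap.swap := by simp
        rw [this]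
        exact Finset.mem_image_of_mem _ h
      · right
        refine ⟨u.swap, Finset.mem_image_of_mem _ hu, ?_⟩
        rw [grid_adj] at hadj ⊢
        tauto
    · simp [Finset.image_image, Function.comp, Finset.image_id']

/-- The number of dominating sets of the grid is supermultiplicative in each dimension:
`G_{m×(n₁+n₂)}(1) ≥ G_{m×n₁}(1)·G_{m×n₂}(1)` and
`G_{(m₁+m₂)×n}(1) ≥ G_{m₁×n}(1)·G_{m₂×n}(1)`. -/
theorem numDomGrid_supermultiplicative :
    (∀ m n₁ n₂ : ℕ, 0 < m → 0 < n₁ → 0 < n₂ →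
      numDomGrid m n₁ * numDomGrid m n₂ ≤ numDomGrid m (n₁ + n₂)) ∧
    (∀ m₁ m₂ n : ℕ, 0 < m₁ → 0 < m₂ → 0 < n →
      numDomGrid m₁ n * numDomGrid m₂ n ≤ numDomGrid (m₁ + m₂) n) := by
  constructor
  · intro m n₁ n₂ _ _ _
    exact key m n₁ n₂
  · intro m₁ m₂ n _ _ _
    rw [swap_eq m₁ n, swap_eq m₂ n, swap_eq (m₁ + m₂) n]
    exact key n m₁ m₂
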